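/- Let N ≥ 1, 0 ≤ r ≤ N-1, and let e_j = (-1)^{j-1} [z^{N+1-j}]((y+z)(1+z x_1)···(1+z x_r)) for 0 ≤ j ≤ N+1 (so e_j = 0 unless N-r ≤ j ≤ N+1). For m ≥ 1, let T_m be the m×m determinant with (i,j)-entry e_{N - i + j} (a banded Toeplitz determinant with e_N on the diagonal and e_{N+1} on the superdiagonal), and set T_0 = 1. Then T_m = (-1)^{(N-1)m} [t^m] (1/((1-t)(1-x_1 y t)···(1-x_r y t))). -/

import Mathlib

/- STATEMENT 2: With `e_j = (-1)^(j-1) [z^(N+1-j)]((y+z)(1+z x_1)⋯(1+z x_r))` for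
`0 ≤ j ≤ N+1` (zero otherwise), the `m×m` banded Toeplitz determinant
`T_m = det (e_{N-i+j})` satisfies
`T_m = (-1)^((N-1)m) [t^m] 1/((1-t)(1-x_1 y t)⋯(1-x_r y t))`, in `ℚ(y,x_1,…,x_r)`. -/

open Polynomial

noncomputable abbrev KF (r : ℕ) : Type := FractionRing (MvPolynomial (Fin (r + 1)) ℚ)

noncomputable def yv (r : ℕ) : KF r :=
  algebraMap (MvPolynomial (Fin (r + 1)) ℚ) (KF r) (MvPolynomial.X 0)

noncomputable def xv (r : ℕ) (p : Fin r) : KF r :=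
  algebraMap (MvPolynomial (Fin (r + 1)) ℚ) (KF r) (MvPolynomial.X p.succ)

/-- The polynomial `(y+z)(1+z x_1)⋯(1+z x_r)` in the variable `z`. -/
noncomputable def Pz (r : ℕ) : Polynomial (KF r) :=
  (Polynomial.C (yv r) + Polynomial.X) *
    ∏ p : Fin r, (1 + Polynomial.C (xv r p) * Polynomial.X)

/-- `e_j = (-1)^(j-1) [z^(N+1-j)]((y+z)∏(1+z x_p))` for `0 ≤ j ≤ N+1`, else `0`. -/
noncomputable def elemE (N r : ℕ) (j : ℤ) : KF r :=
  if 0 ≤ j ∧ j ≤ (N : ℤ) + 1 then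
    (-1 : KF r) ^ (j + 1).toNat * (Pz r).coeff (N + 1 - j.toNat)
  else 0

noncomputable def Gp (r : ℕ) : Polynomial (KF r) :=
  (1 - X) * ∏ p : Fin r, (1 - C (xv r p * yv r) * X)

lemma yv_ne (r : ℕ) : yv r ≠ 0 := by
  unfold yv
  rw [map_ne_zero_iff _ (IsFractionRing.injective (MvPolynomial (Fin (r+1)) ℚ) (KF r))]
  exact MvPolynomial.X_ne_zero 0

lemma Gp_coeff_zero (r : ℕ) : (Gp r).coeff 0 = 1 := by
  rw [Polynomial.coeff_zero_eq_eval_zero]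
  simp only [Gp, eval_mul, eval_sub, eval_one, eval_X, eval_prod, eval_mul, eval_C, sub_zero, mul_zero, one_mul]
  simp

lemma natDegree_Gp_le (r : ℕ) : (Gp r).natDegree ≤ r + 1 := by
  unfold Gp
  refine le_trans (natDegree_mul_le) ?_
  have h1 : (1 - X : Polynomial (KF r)).natDegree ≤ 1 := by
    refine le_trans (natDegree_sub_le _ _) ?_
    simp
  have h2 : (∏ p : Fin r, (1 - C (xv r p * yv r) * X)).natDegree ≤ r := by
    refine le_trans (natDegree_prod_le _ _) ?_
    refine le_trans (Finset.sum_le_card_nsmul _ _ 1 ?_) (by simp)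
    intro p _
    refine le_trans (natDegree_sub_le _ _) ?_
    simp only [natDegree_one, max_le_iff]
    exact ⟨by omega, le_trans natDegree_mul_le (by rw [natDegree_C, natDegree_X])⟩
  omega

lemma coe_Gp (r : ℕ) : ((Gp r : Polynomial (KF r)) : PowerSeries (KF r)) =
    (1 - PowerSeries.X) * ∏ p : Fin r, (1 - PowerSeries.C (R := KF r) (xv r p * yv r) * PowerSeries.X) := by
  unfold Gp
  rw [Polynomial.coe_mul]
  congr 1
  · rw [Polynomial.coe_sub, Polynomial.coe_one, Polynomial.coe_X]
  · rw [show (((∏ p : Fin r, (1 - C (xv r p * yv r) * X)) : Polynomial (KF r)) : PowerSeries (KF r)) = Polynomial.coeToPowerSeries.ringHom (∏ p : Fin r, (1 - C (xv r p * yv r) * X)) from rfl, map_prod]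
    refine Finset.prod_congr rfl fun p _ => ?_
    simp only [map_sub, map_mul, map_one, Polynomial.coeToPowerSeries.ringHom_apply,
      Polynomial.coe_C, Polynomial.coe_X]

noncomputable def hh (r : ℕ) (n : ℕ) : KF r :=
  PowerSeries.coeff (R := KF r) n (((Gp r : Polynomial (KF r)) : PowerSeries (KF r)))⁻¹

lemma conv (r n : ℕ) :
    ∑ k ∈ Finset.range (n+1), (Gp r).coeff k * hh r (n - k) = if n = 0 then 1 else 0 := by
  have hc : PowerSeries.constantCoeff (R := KF r) ((Gp r : PowerSeries (KF r))) ≠ 0 := by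
    rw [← PowerSeries.coeff_zero_eq_constantCoeff_apply, Polynomial.coeff_coe, Gp_coeff_zero]
    exact one_ne_zero
  have h := PowerSeries.mul_inv_cancel _ hc
  have h2 := congrArg (PowerSeries.coeff (R := KF r) n) h
  rw [PowerSeries.coeff_mul, PowerSeries.coeff_one] at h2
  rw [← h2, Finset.Nat.sum_antidiagonal_eq_sum_range_succ_mk]
  exact Finset.sum_congr rfl fun k _ => by rw [Polynomial.coeff_coe]; rfl

lemma hh_zero (r : ℕ) : hh r 0 = 1 := by
  have := conv r 0
  simpa [Gp_coeff_zero] using this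

lemma coeff_aeval_C_mul_X {K : Type*} [CommRing K] (p : Polynomial K) (a : K) (k : ℕ) :
    (aeval (C a * X) p).coeff k = a ^ k * p.coeff k := by
  rw [aeval_def, eval₂_eq_sum, Polynomial.sum_def, finset_sum_coeff]
  have : ∀ n ∈ p.support,
      (algebraMap K (Polynomial K) (p.coeff n) * (C a * X) ^ n).coeff k
        = if k = n then a ^ k * p.coeff k else 0 := by
    intro n _
    rw [mul_pow, ← C_pow, algebraMap_eq, ← mul_assoc, ← C_mul, coeff_C_mul_X_pow]
    split_ifs with h
    · subst h; ring_nf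
    · rfl
  rw [Finset.sum_congr rfl this, Finset.sum_ite_eq p.support k]
  split_ifs with h
  · rfl
  · rw [Polynomial.notMem_support_iff.mp h, mul_zero]

lemma aeval_Pz (r : ℕ) : aeval (C (-(yv r)) * X) (Pz r) = C (yv r) * Gp r := by
  unfold Pz Gp
  simp only [map_mul, map_add, aeval_C, aeval_X, map_prod, map_one, C_mul,
    algebraMap_eq]
  rw [Finset.prod_congr rfl (fun x (_ : x ∈ Finset.univ) =>
        show (1 - C (xv r x) * C (yv r) * X : Polynomial (KF r))
            = (1 + C (xv r x) * (C (-yv r) * X)) from by rw [map_neg]; ring),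
      ← mul_assoc]
  congr 1
  rw [map_neg]; ring

lemma Pz_coeff (r k : ℕ) :
    (Pz r).coeff k = (-1) ^ k * yv r * (yv r)⁻¹ ^ k * (Gp r).coeff k := by
  have h := congrArg (fun q => Polynomial.coeff q k) (aeval_Pz r)
  simp only [coeff_aeval_C_mul_X, coeff_C_mul] at h
  have hy := yv_ne r
  have : (-(yv r)) ^ k ≠ 0 := pow_ne_zero _ (neg_ne_zero.mpr hy)
  rw [neg_pow] at h
  have hk : ((-1:KF r)^k) * ((-1:KF r)^k) = 1 := by
    rw [← pow_add, ← two_mul, pow_mul]; norm_num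
  have hinv : (yv r)⁻¹ ^ k * yv r ^ k = 1 := by rw [← mul_pow, inv_mul_cancel₀ hy, one_pow]
  linear_combination ((-1:KF r)^k * (yv r)⁻¹ ^ k) * h - ((yv r)⁻¹ ^ k * yv r ^ k * (Pz r).coeff k) * hk
    - (Pz r).coeff k * hinv


noncomputable def M0 (r m : ℕ) : Matrix (Fin m) (Fin m) (KF r) :=
  Matrix.of fun i j => if (j:ℕ) ≤ (i:ℕ)+1 then (Gp r).coeff ((i:ℕ)+1-(j:ℕ)) else 0

noncomputable def Hm (r m : ℕ) : Matrix (Fin m) (Fin m) (KF r) :=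
  Matrix.of fun i j => if (j:ℕ) ≤ (i:ℕ) then hh r ((i:ℕ)-(j:ℕ)) else 0

lemma key (r m : ℕ) (i j : Fin m) :
    (M0 r m * Hm r m) i j
      = (if (j:ℕ) = (i:ℕ)+1 then 1 else 0) - (if (i:ℕ) = m-1 then hh r (m-(j:ℕ)) else 0) := by
  classical
  set f : ℕ → KF r := fun k =>
    (if k ≤ (i:ℕ)+1 then (Gp r).coeff ((i:ℕ)+1-k) else 0) *
      (if (j:ℕ) ≤ k then hh r (k-(j:ℕ)) else 0) with hf
  have hmul : (M0 r m * Hm r m) i j = ∑ k : Fin m, f (k:ℕ) := by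
    rw [Matrix.mul_apply]
    exact Finset.sum_congr rfl fun k _ => rfl
  rw [hmul, Fin.sum_univ_eq_sum_range f m]
  have hi : (i:ℕ) < m := i.isLt
  have hj : (j:ℕ) < m := j.isLt
  have hfm : f m = if (i:ℕ) = m-1 then hh r (m-(j:ℕ)) else 0 := by
    by_cases him : (i:ℕ) = m-1
    · have h1 : m ≤ (i:ℕ)+1 := by omega
      have h2 : (i:ℕ)+1-m = 0 := by omega
      rw [hf]
      simp only [if_pos h1, if_pos (le_of_lt hj), h2, Gp_coeff_zero, one_mul, if_pos him]
    · have h1 : ¬ (m ≤ (i:ℕ)+1) := by omega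
      rw [hf]
      simp only [if_neg h1, zero_mul, if_neg him]
  have h2 : ∑ k ∈ Finset.range (m+1), f k = if (j:ℕ) = (i:ℕ)+1 then 1 else 0 := by
    by_cases hji : (j:ℕ) ≤ (i:ℕ)+1
    · have hs1 : ∑ k ∈ Finset.range ((i:ℕ)+2), f k = ∑ k ∈ Finset.range (m+1), f k := by
        refine Finset.sum_subset (Finset.range_subset_range.mpr (by omega)) ?_
        intro k _ hk
        rw [Finset.mem_range, not_lt] at hk
        rw [hf]
        simp only [if_neg (by omega : ¬ (k ≤ (i:ℕ)+1)), zero_mul]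
      have hs2 : ∑ k ∈ Finset.Ico (j:ℕ) ((i:ℕ)+2), f k = ∑ k ∈ Finset.range ((i:ℕ)+2), f k := by
        rw [Finset.range_eq_Ico]
        refine Finset.sum_subset (Finset.Ico_subset_Ico (by omega) le_rfl) ?_
        intro k hk hk2
        rw [Finset.mem_Ico] at hk hk2
        have : k < (j:ℕ) := by omega
        rw [hf]
        simp only [if_neg (by omega : ¬ ((j:ℕ) ≤ k)), mul_zero]
      rw [← hs1, ← hs2, Finset.sum_Ico_eq_sum_range]
      set D := (i:ℕ)+1-(j:ℕ) with hD
      have hlen : (i:ℕ)+2-(j:ℕ) = D + 1 := by omega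
      rw [hlen]
      have hterm : ∀ t ∈ Finset.range (D+1), f ((j:ℕ)+t) = (Gp r).coeff (D-t) * hh r t := by
        intro t ht
        rw [Finset.mem_range] at ht
        rw [hf]
        simp only [if_pos (by omega : (j:ℕ)+t ≤ (i:ℕ)+1), if_pos (by omega : (j:ℕ) ≤ (j:ℕ)+t)]
        congr 2 <;> omega
      rw [Finset.sum_congr rfl hterm]
      have hrefl : ∑ t ∈ Finset.range (D+1), (Gp r).coeff (D-t) * hh r t
          = ∑ t ∈ Finset.range (D+1), (Gp r).coeff t * hh r (D-t) := by
        rw [← Finset.sum_range_reflect (fun t => (Gp r).coeff t * hh r (D-t)) (D+1)]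
        refine Finset.sum_congr rfl fun t ht => ?_
        rw [Finset.mem_range] at ht
        congr 2 <;> omega
      rw [hrefl, conv r D]
      congr 1
      · simp only [eq_iff_iff]
        omega
    · have : ∀ k ∈ Finset.range (m+1), f k = 0 := by
        intro k _
        by_cases hk : k ≤ (i:ℕ)+1
        · rw [hf]; simp only [if_neg (by omega : ¬ ((j:ℕ) ≤ k)), mul_zero]
        · rw [hf]; simp only [if_neg hk, zero_mul]
      rw [Finset.sum_eq_zero this, if_neg (by omega)]
  rw [Finset.sum_range_succ] at h2
  rw [← h2, hfm]
  ring

lemma det_Hm (r m : ℕ) : (Hm r m).det = 1 := by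
  rw [Matrix.det_of_lowerTriangular (Hm r m)]
  · refine Finset.prod_eq_one fun i _ => ?_
    simp only [Hm, Matrix.of_apply, if_pos le_rfl, Nat.sub_self, hh_zero]
  · intro i j hij
    have : ¬ ((j:ℕ) ≤ (i:ℕ)) := by
      simp only [OrderDual.toDual_lt_toDual] at hij
      exact not_le.mpr (Fin.lt_iff_val_lt_val.mp hij)
    simp only [Hm, Matrix.of_apply, if_neg this]

lemma det_M0 (r m : ℕ) : (M0 r m).det = (-1)^m * hh r m := by
  cases m with
  | zero => simp [Matrix.det_isEmpty, hh_zero]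
  | succ n =>
    have h1 : (M0 r (n+1)).det = (M0 r (n+1) * Hm r (n+1)).det := by
      rw [Matrix.det_mul, det_Hm, mul_one]
    rw [h1]
    have hB : (M0 r (n+1) * Hm r (n+1)) = Matrix.of (fun i j : Fin (n+1) =>
        (if (j:ℕ) = (i:ℕ)+1 then 1 else 0) - (if (i:ℕ) = n then hh r (n+1-(j:ℕ)) else 0)) := by
      ext i j
      rw [key]
      rfl
    rw [hB, Matrix.det_succ_column_zero]
    rw [Finset.sum_eq_single (Fin.last n)]
    · have hentry : (Matrix.of (fun i j : Fin (n+1) =>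
          (if (j:ℕ) = (i:ℕ)+1 then 1 else 0) - (if (i:ℕ) = n then hh r (n+1-(j:ℕ)) else 0)))
            (Fin.last n) 0 = - hh r (n+1) := by
        simp only [Matrix.of_apply, Fin.val_last, Fin.val_zero]
        simp
      have hsub : (Matrix.of (fun i j : Fin (n+1) =>
          (if (j:ℕ) = (i:ℕ)+1 then 1 else 0) - (if (i:ℕ) = n then hh r (n+1-(j:ℕ)) else 0))).submatrix
            (Fin.last n).succAbove Fin.succ = (1 : Matrix (Fin n) (Fin n) (KF r)) := by
        ext i' j'
        rw [Matrix.submatrix_apply, Fin.succAbove_last]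
        simp only [Matrix.of_apply, Fin.coe_castSucc, Fin.val_succ]
        rw [if_neg (by omega : ¬ ((i':ℕ) = n)), sub_zero]
        by_cases h : i' = j'
        · subst h; rw [if_pos rfl, Matrix.one_apply_eq]
        · rw [if_neg (fun hc => h (Fin.ext (by omega)).symm), Matrix.one_apply_ne h]
      rw [hentry, hsub, Matrix.det_one, Fin.val_last, pow_succ]
      ring
    · intro i _ hi
      have : ¬ ((i:ℕ) = n) := fun hc => hi (Fin.ext (by simp [hc]))
      simp only [Matrix.of_apply, Fin.val_zero]
      simp [this]
    · intro h
      exact absurd (Finset.mem_univ _) h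

lemma pow_aux {K : Type*} [Field K] {y : K} (hy : y ≠ 0) (a b c : ℕ) (h : a + b = c + 1) :
    y * y⁻¹ ^ a = y⁻¹ ^ c * y ^ b := by
  have : y ^ (c+1) = y ^ (a + b) := by rw [h]
  rw [pow_add, pow_succ] at this
  have t : y * y ^ c = y ^ a * y ^ b := by rw [← pow_succ', ← pow_add, h]
  have ia : y⁻¹ ^ a * y ^ a = 1 := by rw [← mul_pow, inv_mul_cancel₀ hy, one_pow]
  have ic : y⁻¹ ^ c * y ^ c = 1 := by rw [← mul_pow, inv_mul_cancel₀ hy, one_pow]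
  linear_combination (-(y * y⁻¹ ^ a)) * ic + (y⁻¹ ^ a * y⁻¹ ^ c) * t + (y⁻¹ ^ c * y ^ b) * ia

lemma entry (N r : ℕ) (hN : 1 ≤ N) (hr : r ≤ N - 1) (m : ℕ) (i j : Fin m) :
    elemE N r ((N:ℤ) - (i:ℕ) + (j:ℕ))
      = (-1)^N * ((yv r)⁻¹)^(i:ℕ) * (M0 r m i j) * (yv r)^(j:ℕ) := by
  have hy := yv_ne r
  by_cases hb : (j:ℕ) ≤ (i:ℕ)+1
  · by_cases hc : (i:ℕ) ≤ N + (j:ℕ)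
    · -- main band case
      rw [elemE, if_pos (by constructor <;> omega)]
      have h1 : ((N:ℤ) - (i:ℕ) + (j:ℕ)).toNat = N + (j:ℕ) - (i:ℕ) := by omega
      have h2 : ((N:ℤ) - (i:ℕ) + (j:ℕ) + 1).toNat = N + 1 + (j:ℕ) - (i:ℕ) := by omega
      rw [h1, h2]
      have h3 : N + 1 - (N + (j:ℕ) - (i:ℕ)) = (i:ℕ) + 1 - (j:ℕ) := by omega
      rw [h3, Pz_coeff]
      have hM : M0 r m i j = (Gp r).coeff ((i:ℕ)+1-(j:ℕ)) := by
        simp only [M0, Matrix.of_apply, if_pos hb]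
      rw [hM]
      have hsign : ((-1 : KF r)) ^ (N + 1 + (j:ℕ) - (i:ℕ)) * (-1) ^ ((i:ℕ)+1-(j:ℕ))
          = (-1) ^ N := by
        rw [← pow_add, show (N + 1 + (j:ℕ) - (i:ℕ)) + ((i:ℕ)+1-(j:ℕ)) = N + 2 by omega,
          pow_add]
        norm_num
      have hpow : yv r * (yv r)⁻¹ ^ ((i:ℕ)+1-(j:ℕ)) = (yv r)⁻¹ ^ (i:ℕ) * (yv r) ^ (j:ℕ) :=
        pow_aux hy _ _ _ (by omega)
      calc (-1:KF r) ^ (N + 1 + (j:ℕ) - (i:ℕ)) *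
            ((-1) ^ ((i:ℕ)+1-(j:ℕ)) * yv r * (yv r)⁻¹ ^ ((i:ℕ)+1-(j:ℕ)) *
              (Gp r).coeff ((i:ℕ)+1-(j:ℕ)))
          = ((-1:KF r) ^ (N + 1 + (j:ℕ) - (i:ℕ)) * (-1) ^ ((i:ℕ)+1-(j:ℕ))) *
            (yv r * (yv r)⁻¹ ^ ((i:ℕ)+1-(j:ℕ))) * (Gp r).coeff ((i:ℕ)+1-(j:ℕ)) := by ring
        _ = (-1) ^ N * ((yv r)⁻¹ ^ (i:ℕ) * (yv r) ^ (j:ℕ)) * (Gp r).coeff ((i:ℕ)+1-(j:ℕ)) := by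
            rw [hsign, hpow]
        _ = (-1) ^ N * (yv r)⁻¹ ^ (i:ℕ) * (Gp r).coeff ((i:ℕ)+1-(j:ℕ)) * (yv r) ^ (j:ℕ) := by
            ring
    · -- below the band : both sides zero
      rw [elemE, if_neg (by omega)]
      have hM : M0 r m i j = (Gp r).coeff ((i:ℕ)+1-(j:ℕ)) := by
        simp only [M0, Matrix.of_apply, if_pos hb]
      have hz : (Gp r).coeff ((i:ℕ)+1-(j:ℕ)) = 0 := by
        apply Polynomial.coeff_eq_zero_of_natDegree_lt
        have := natDegree_Gp_le r
        omega
      rw [hM, hz]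
      ring
  · -- above the band
    rw [elemE, if_neg (by omega)]
    have hM : M0 r m i j = 0 := by
      simp only [M0, Matrix.of_apply, if_neg hb]
    rw [hM]
    ring

theorem toeplitz_det_eq (N r m : ℕ) (hN : 1 ≤ N) (hr : r ≤ N - 1) :
    Matrix.det (Matrix.of fun i j : Fin m => elemE N r ((N : ℤ) - (i : ℕ) + (j : ℕ)))
      = (-1) ^ ((N - 1) * m) *
        PowerSeries.coeff (R := KF r) m
          (((1 - PowerSeries.X) *
            ∏ p : Fin r, (1 - PowerSeries.C (R := KF r) (xv r p * yv r) * PowerSeries.X))⁻¹) := by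
  have hy := yv_ne r
  rw [← coe_Gp r]
  have hM : (Matrix.of fun i j : Fin m => elemE N r ((N : ℤ) - (i : ℕ) + (j : ℕ)))
      = ((-1 : KF r)^N) • (Matrix.diagonal (fun i : Fin m => (yv r)⁻¹ ^ (i:ℕ)) * M0 r m *
          Matrix.diagonal (fun j : Fin m => (yv r) ^ (j:ℕ))) := by
    ext i j
    rw [Matrix.smul_apply, Matrix.mul_diagonal, Matrix.diagonal_mul, Matrix.of_apply,
      entry N r hN hr m i j, smul_eq_mul]
    ring
  rw [hM, Matrix.det_smul, Matrix.det_mul, Matrix.det_mul, Matrix.det_diagonal,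
    Matrix.det_diagonal, det_M0]
  have hprod : (∏ i : Fin m, (yv r)⁻¹ ^ (i:ℕ)) * (∏ i : Fin m, (yv r) ^ (i:ℕ)) = 1 := by
    rw [← Finset.prod_mul_distrib]
    exact Finset.prod_eq_one fun i _ => by rw [← mul_pow, inv_mul_cancel₀ hy, one_pow]
  have hsign : ((-1 : KF r)^N)^m * (-1)^m = (-1)^((N-1)*m) := by
    have h : N * m + m = (N-1)*m + 2*m := by
      cases N with
      | zero => omega
      | succ n => simp only [Nat.succ_sub_one]; ring
    rw [← pow_mul, ← pow_add, h, pow_add, pow_mul]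
    norm_num
  rw [Fintype.card_fin]
  have hcoe : PowerSeries.coeff (R := KF r) m (((Gp r : Polynomial (KF r)) : PowerSeries (KF r)))⁻¹
      = hh r m := rfl
  rw [hcoe]
  linear_combination ((∏ i : Fin m, (yv r)⁻¹ ^ (i:ℕ)) * (∏ i : Fin m, (yv r) ^ (i:ℕ)) *
      hh r m) * hsign + ((-1:KF r)^((N-1)*m) * hh r m) * hprod
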